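/- Let σ be a bijection of a finite set S, f : S → ℝ, and U on ℂ^S given by (Uψ)(s) = exp(2πi·f(s))·ψ(σ(s)). Suppose the σ-orbits O₁,…,O_r have sizes T₁,…,T_r and orbit sums a_i = Σ_{s ∈ O_i} f(s). If the values exp(2πi·(a_i/T_i + j/T_i)) for 1 ≤ i ≤ r, 1 ≤ j ≤ T_i are pairwise distinct, then U has simple spectrum (all eigenspaces are one-dimensional). -/
import Mathlib

open scoped BigOperators

/-- `e x = exp(2πi x)` -/
noncomputable def e (x : ℝ) : ℂ := Complex.exp (2 * Real.pi * Complex.I * x)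

lemma e_add (x y : ℝ) : e (x + y) = e x * e y := by
  simp only [e]
  rw [← Complex.exp_add]
  congr 1
  push_cast
  ring

lemma e_ne_zero (x : ℝ) : e x ≠ 0 := Complex.exp_ne_zero _

lemma e_zero : e 0 = 1 := by simp [e]

lemma e_one : e 1 = 1 := by
  simp only [e, Complex.ofReal_one, mul_one]
  rw [show (2 : ℂ) * Real.pi * Complex.I = 2 * Real.pi * Complex.I by ring]
  exact Complex.exp_two_pi_mul_I

lemma e_pow (x : ℝ) (n : ℕ) : e x ^ n = e (n * x) := by
  simp only [e, ← Complex.exp_nat_mul]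
  push_cast
  ring_nf

/-- any `μ` with `μ^T = e a` has the form `e (a/T + j/T)`, `1 ≤ j ≤ T`. -/
lemma exists_root (μ : ℂ) (T : ℕ) (hT : 0 < T) (a : ℝ) (h : μ ^ T = e a) :
    ∃ j : ℕ, 1 ≤ j ∧ j ≤ T ∧ μ = e (a / T + (j : ℝ) / T) := by
  have hTR : (T : ℝ) ≠ 0 := Nat.cast_ne_zero.mpr hT.ne'
  have hroot : (μ / e (a / T)) ^ T = 1 := by
    rw [div_pow, e_pow, mul_div_cancel₀ _ hTR, h, div_self (e_ne_zero a)]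
  have : NeZero T := ⟨hT.ne'⟩
  obtain ⟨i, hiT, hi⟩ := (Complex.isPrimitiveRoot_exp T hT.ne').eq_pow_of_pow_eq_one hroot
  have hexp : Complex.exp (2 * Real.pi * Complex.I / T) ^ i = e ((i : ℝ) / T) := by
    rw [← Complex.exp_nat_mul, e]
    push_cast
    ring_nf
  have hμ : μ = e (a / T + (i : ℝ) / T) := by
    rw [e_add, ← hexp, hi, mul_div_cancel₀ _ (e_ne_zero _)]
  rcases Nat.eq_zero_or_pos i with hi0 | hi1
  · refine ⟨T, hT, le_refl T, ?_⟩
    have : ((T : ℝ)) / T = 1 := div_self hTR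
    rw [hμ, hi0, e_add, e_add, this, e_one]
    simp [e_zero]
  · exact ⟨i, hi1, hiT.le, hμ⟩

/-- if the candidate eigenvalues `exp(2πi(a_i/T_i + j/T_i))` attached to the
orbits of `σ` (with orbit sizes `T_i` and orbit sums `a_i`) are pairwise distinct, then the
twisted shift `(Uψ)(s) = exp(2πi f(s)) ψ(σ s)` has simple spectrum: all eigenspaces are
one-dimensional. -/
theorem stmt17 (S : Type*) [Fintype S] (σ : Equiv.Perm S) (f : S → ℝ)
    (T : S → ℕ) (hT : ∀ s, T s = Function.minimalPeriod (⇑σ) s)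
    (a : S → ℝ) (ha : ∀ s, a s = ∑ k ∈ Finset.range (T s), f ((⇑σ)^[k] s))
    (hdist : ∀ s t : S, ∀ j k : ℕ, 1 ≤ j → j ≤ T s → 1 ≤ k → k ≤ T t →
      e (a s / T s + (j : ℝ) / T s) = e (a t / T t + (k : ℝ) / T t) →
      (∃ m : ℕ, t = (⇑σ)^[m] s) ∧ j = k)
    (U : (S → ℂ) → (S → ℂ)) (hU : ∀ ψ s, U ψ s = e (f s) * ψ (σ s)) :
    ∀ (μ : ℂ) (ψ φ : S → ℂ), ψ ≠ 0 → φ ≠ 0 → U ψ = μ • ψ → U φ = μ • φ →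
      ∃ c : ℂ, φ = c • ψ := by
  intro μ ψ φ hψ0 hφ0 hψ hφ
  -- positivity of periods
  have hTpos : ∀ s, 0 < T s := by
    intro s
    rw [hT s]
    apply Function.IsPeriodicPt.minimalPeriod_pos (orderOf_pos σ)
    show (⇑σ)^[orderOf σ] s = s
    rw [Equiv.Perm.iterate_eq_pow, pow_orderOf_eq_one]
    rfl
  -- the key recursion
  have key : ∀ (χ : S → ℂ), U χ = μ • χ → ∀ (k : ℕ) (s : S),
      μ ^ k * χ s = e (∑ j ∈ Finset.range k, f ((⇑σ)^[j] s)) * χ ((⇑σ)^[k] s) := by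
    intro χ hχ k s
    induction k with
    | zero => simp [e_zero]
    | succ k ih =>
      have step : μ * χ ((⇑σ)^[k] s) = e (f ((⇑σ)^[k] s)) * χ ((⇑σ)^[k + 1] s) := by
        have h := congrFun hχ ((⇑σ)^[k] s)
        rw [hU] at h
        simp only [Pi.smul_apply, smul_eq_mul] at h
        rw [Function.iterate_succ_apply']
        exact h.symm
      rw [pow_succ, mul_comm (μ ^ k) μ, mul_assoc, ih, ← mul_assoc, mul_comm μ, mul_assoc,
        step, Finset.sum_range_succ, e_add]
      ring
  -- nonvanishing point forces the eigenvalue form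
  have form : ∀ (χ : S → ℂ), U χ = μ • χ → ∀ s, χ s ≠ 0 →
      ∃ j : ℕ, 1 ≤ j ∧ j ≤ T s ∧ μ = e (a s / T s + (j : ℝ) / T s) := by
    intro χ hχ s hs
    have hper : (⇑σ)^[T s] s = s := by rw [hT s]; exact Function.iterate_minimalPeriod
    have := key χ hχ (T s) s
    rw [hper, ← ha s] at this
    have hμT : μ ^ T s = e (a s) := mul_right_cancel₀ hs this
    exact exists_root μ (T s) (hTpos s) (a s) hμT
  -- choose a base point for ψ
  obtain ⟨s0, hs0⟩ := Function.ne_iff.mp hψ0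
  simp only [Pi.zero_apply] at hs0
  obtain ⟨j0, hj01, hj02, hj0⟩ := form ψ hψ s0 hs0
  -- any point where ψ or φ is nonzero lies in the orbit of s0
  have orbit : ∀ (χ : S → ℂ), U χ = μ • χ → ∀ t, χ t ≠ 0 → ∃ m : ℕ, t = (⇑σ)^[m] s0 := by
    intro χ hχ t ht
    obtain ⟨k, hk1, hk2, hk⟩ := form χ hχ t ht
    exact (hdist s0 t j0 k hj01 hj02 hk1 hk2 (hj0 ▸ hk ▸ rfl)).1
  refine ⟨φ s0 / ψ s0, ?_⟩
  funext t
  by_cases hmem : ∃ m : ℕ, t = (⇑σ)^[m] s0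
  · obtain ⟨m, rfl⟩ := hmem
    have h1 := key ψ hψ m s0
    have h2 := key φ hφ m s0
    have hE := e_ne_zero (∑ j ∈ Finset.range m, f ((⇑σ)^[j] s0))
    have : e (∑ j ∈ Finset.range m, f ((⇑σ)^[j] s0)) * (φ ((⇑σ)^[m] s0) * ψ s0)
        = e (∑ j ∈ Finset.range m, f ((⇑σ)^[j] s0)) * (φ s0 * ψ ((⇑σ)^[m] s0)) := by
      calc e (∑ j ∈ Finset.range m, f ((⇑σ)^[j] s0)) * (φ ((⇑σ)^[m] s0) * ψ s0)
          = (e (∑ j ∈ Finset.range m, f ((⇑σ)^[j] s0)) * φ ((⇑σ)^[m] s0)) * ψ s0 := by ring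
        _ = (μ ^ m * φ s0) * ψ s0 := by rw [h2]
        _ = φ s0 * (μ ^ m * ψ s0) := by ring
        _ = φ s0 * (e (∑ j ∈ Finset.range m, f ((⇑σ)^[j] s0)) * ψ ((⇑σ)^[m] s0)) := by rw [h1]
        _ = _ := by ring
    have hmul : φ ((⇑σ)^[m] s0) * ψ s0 = φ s0 * ψ ((⇑σ)^[m] s0) := mul_left_cancel₀ hE this
    show φ ((⇑σ)^[m] s0) = φ s0 / ψ s0 * ψ ((⇑σ)^[m] s0)
    rw [div_mul_eq_mul_div, eq_div_iff hs0]
    linear_combination hmul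
  · have hψt : ψ t = 0 := by
      by_contra h; exact hmem (orbit ψ hψ t h)
    have hφt : φ t = 0 := by
      by_contra h; exact hmem (orbit φ hφ t h)
    show φ t = φ s0 / ψ s0 * ψ t
    rw [hψt, hφt, mul_zero]
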